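/- Let a : ℤ → ℂ^{r×r} be a finitely supported mask with order m+1 sum rules with respect to a finitely supported υ : ℤ → ℂ^{1×r} with υ̂(0) ≠ 0, i.e., υ̂(2ξ)â(ξ) = υ̂(ξ) + O(|ξ|^{m+1}) and υ̂(2ξ)â(ξ+π) = O(|ξ|^{m+1}) as ξ → 0. Then for each j = 0,…,m, the vector polynomial p⃗_j := ((·)^j/j!)*υ satisfies S_a p⃗_j = 2^{-j} p⃗_j and deg(p⃗_j) = j. -/

import Mathlib

open Complex Polynomial

/-- Symbol (Fourier series) of a scalar sequence. -/
noncomputable def symb (u : ℤ → ℂ) (ξ : ℂ) : ℂ :=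
  ∑ᶠ k : ℤ, u k * Complex.exp (-Complex.I * k * ξ)

/-- Entrywise symbol of a matrix-valued sequence. -/
noncomputable def symbM {r : ℕ} (a : ℤ → Fin r → Fin r → ℂ) (i ℓ : Fin r) (ξ : ℂ) : ℂ :=
  ∑ᶠ k : ℤ, a k i ℓ * Complex.exp (-Complex.I * k * ξ)

/-- Vector subdivision operator on row-vector sequences. -/
noncomputable def sd {r : ℕ} (a : ℤ → Fin r → Fin r → ℂ) (w : ℤ → Fin r → ℂ) :
    ℤ → Fin r → ℂ :=
  fun j ℓ => 2 * ∑ᶠ k : ℤ, ∑ i : Fin r, w k i * a (j - 2 * k) i ℓ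

/-- Convolution of a polynomial with a finitely supported sequence, as a polynomial. -/
noncomputable def pconv (q : Polynomial ℂ) (u : ℤ → ℂ) : Polynomial ℂ :=
  ∑ᶠ k : ℤ, u k • (q.comp (Polynomial.X - Polynomial.C (k : ℂ)))


lemma expsum_deriv {ι : Type*} (D : Finset ι) (c μ : ι → ℂ) :
    deriv (fun ξ : ℂ => ∑ d ∈ D, c d * Complex.exp (μ d * ξ)) =
      fun ξ => ∑ d ∈ D, (c d * μ d) * Complex.exp (μ d * ξ) := by
  funext ξ
  have H : HasDerivAt (fun ξ : ℂ => ∑ d ∈ D, c d * Complex.exp (μ d * ξ))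
      (∑ d ∈ D, (c d * μ d) * Complex.exp (μ d * ξ)) ξ := by
    apply HasDerivAt.fun_sum
    intro d _
    have h1 : HasDerivAt (fun ξ : ℂ => μ d * ξ) (μ d) ξ := by
      simpa using (hasDerivAt_id ξ).const_mul (μ d)
    have := (h1.cexp).const_mul (c d)
    exact this.congr_deriv (by ring)
  exact H.deriv

lemma expsum_iteratedDeriv {ι : Type*} (D : Finset ι) (μ : ι → ℂ) :
    ∀ (t : ℕ) (c : ι → ℂ),
      iteratedDeriv t (fun ξ : ℂ => ∑ d ∈ D, c d * Complex.exp (μ d * ξ)) =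
        fun ξ => ∑ d ∈ D, c d * μ d ^ t * Complex.exp (μ d * ξ) := by
  intro t
  induction t with
  | zero => intro c; funext ξ; simp
  | succ t ih =>
    intro c
    rw [iteratedDeriv_succ', expsum_deriv, ih (fun d => c d * μ d)]
    funext ξ
    refine Finset.sum_congr rfl fun d _ => by ring

lemma expsum_moment {ι : Type*} (D : Finset ι) (μ c : ι → ℂ) (t : ℕ)
    (f : ℂ → ℂ) (hf : f = fun ξ : ℂ => ∑ d ∈ D, c d * Complex.exp (μ d * ξ))
    (h : iteratedDeriv t f 0 = 0) :
    ∑ d ∈ D, c d * μ d ^ t = 0 := by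
  rw [hf, expsum_iteratedDeriv] at h
  simpa using h

noncomputable def eps (n : ℤ) : ℂ := Complex.exp ((-Complex.I * n) * (Real.pi : ℂ))

lemma eps_add (p q : ℤ) : eps (p + q) = eps p * eps q := by
  unfold eps
  rw [← Complex.exp_add]
  congr 1
  push_cast
  ring

lemma eps_two_mul (k : ℤ) : eps (2 * k) = 1 := by
  unfold eps
  have : (-Complex.I * ((2 * k : ℤ) : ℂ)) * (Real.pi : ℂ) = ((-k : ℤ) : ℂ) * (2 * Real.pi * Complex.I) := by
    push_cast; ring
  rw [this, Complex.exp_int_mul_two_pi_mul_I]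

lemma eps_one : eps 1 = -1 := by
  unfold eps
  have : (-Complex.I * ((1 : ℤ) : ℂ)) * (Real.pi : ℂ) = -((Real.pi : ℂ) * Complex.I) := by
    push_cast; ring
  rw [this, Complex.exp_neg, Complex.exp_pi_mul_I]
  norm_num

lemma eps_sub (x n : ℤ) : eps (x - n) = eps x * eps n := by
  have h1 : eps (x - n) * eps (2 * n) = eps (x + n) := by
    rw [← eps_add]; ring_nf
  rw [eps_two_mul, mul_one] at h1
  rw [h1, eps_add]

lemma parity_sum (N : Finset ℤ) (x : ℤ) (g : ℤ → ℂ) :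
    2 * ∑ n ∈ N.filter (fun n => (x - n) % 2 = 0), g n
      = ∑ n ∈ N, g n + eps x * ∑ n ∈ N, g n * eps n := by
  have key : ∀ n ∈ N, g n + eps x * (g n * eps n) = g n * (1 + eps (x - n)) := by
    intro n _; rw [eps_sub]; ring
  have rhs : ∑ n ∈ N, g n + eps x * ∑ n ∈ N, g n * eps n
      = ∑ n ∈ N, g n * (1 + eps (x - n)) := by
    rw [Finset.mul_sum, ← Finset.sum_add_distrib]
    exact Finset.sum_congr rfl key
  rw [rhs, ← Finset.sum_filter_add_sum_filter_not N (fun n => (x - n) % 2 = 0)]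
  have h2 : ∀ n ∈ N.filter (fun n => ¬ (x - n) % 2 = 0), g n * (1 + eps (x - n)) = 0 := by
    intro n hn
    rw [Finset.mem_filter] at hn
    have hmod : (x - n) % 2 = 1 := by omega
    have hdecomp : x - n = 2 * ((x - n) / 2) + 1 := by omega
    rw [hdecomp, eps_add, eps_two_mul, eps_one]
    ring
  rw [Finset.sum_congr rfl h2, Finset.sum_const_zero, add_zero, Finset.mul_sum]
  refine Finset.sum_congr rfl fun n hn => ?_
  rw [Finset.mem_filter] at hn
  have hdecomp : x - n = 2 * ((x - n) / 2) := by omega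
  rw [hdecomp, eps_two_mul]
  ring

lemma expand_side {ι : Type*} (D : Finset ι) (c μ : ι → ℂ) (j : ℕ) (x : ℂ) :
    ∑ d ∈ D, c d * (x - μ d) ^ j =
      ∑ t ∈ Finset.range (j + 1),
        ((-1 : ℂ) ^ (t + j) * x ^ t * (j.choose t : ℂ)) * (∑ d ∈ D, c d * μ d ^ (j - t)) := by
  simp_rw [sub_pow, Finset.mul_sum]
  rw [Finset.sum_comm]
  refine Finset.sum_congr rfl fun t _ => ?_
  refine Finset.sum_congr rfl fun d _ => by ring

lemma moment_transfer {ι κ : Type*} (D : Finset ι) (E : Finset κ)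
    (c μ : ι → ℂ) (c' ν : κ → ℂ) (j : ℕ)
    (h : ∀ t ≤ j, ∑ d ∈ D, c d * μ d ^ t = ∑ e ∈ E, c' e * ν e ^ t) (x : ℂ) :
    ∑ d ∈ D, c d * (x - μ d) ^ j = ∑ e ∈ E, c' e * (x - ν e) ^ j := by
  rw [expand_side, expand_side]
  exact Finset.sum_congr rfl fun t _ => by rw [h (j - t) (Nat.sub_le _ _)]

lemma symbM_eq_symb {r : ℕ} (a : ℤ → Fin r → Fin r → ℂ) (i ℓ : Fin r) :
    symbM a i ℓ = symb (fun k => a k i ℓ) := rfl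

lemma symb_eq_sum {u : ℤ → ℂ} {S : Finset ℤ} (h : Function.support u ⊆ ↑S) (ξ : ℂ) :
    symb u ξ = ∑ k ∈ S, u k * Complex.exp (-Complex.I * k * ξ) := by
  refine finsum_eq_sum_of_support_subset _ fun k hk => h ?_
  simp only [Function.mem_support] at hk ⊢
  exact fun h0 => hk (by rw [h0, zero_mul])

lemma prod_expand {r : ℕ} (a : ℤ → Fin r → Fin r → ℂ) (υ : ℤ → Fin r → ℂ)
    (S N : Finset ℤ)
    (hS : ∀ i, Function.support (fun k => υ k i) ⊆ ↑S)
    (hN : ∀ i ℓ, Function.support (fun k => a k i ℓ) ⊆ ↑N) (ℓ : Fin r) (ξ : ℂ) :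
    ∑ i : Fin r, symb (fun k => υ k i) (2 * ξ) * symbM a i ℓ ξ =
      ∑ p ∈ (Finset.univ : Finset (Fin r)) ×ˢ (S ×ˢ N),
        (υ p.2.1 p.1 * a p.2.2 p.1 ℓ) *
          Complex.exp ((-Complex.I * ((2 * p.2.1 + p.2.2 : ℤ) : ℂ)) * ξ) := by
  rw [Finset.sum_product]
  refine Finset.sum_congr rfl fun i _ => ?_
  rw [symbM_eq_symb, symb_eq_sum (hS i), symb_eq_sum (hN i ℓ), Finset.sum_mul_sum,
    Finset.sum_product]
  refine Finset.sum_congr rfl fun s _ => Finset.sum_congr rfl fun n _ => ?_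
  have harg : (-Complex.I * ((2 * s + n : ℤ) : ℂ)) * ξ =
      -Complex.I * (s : ℂ) * (2 * ξ) + -Complex.I * (n : ℂ) * ξ := by
    push_cast; ring
  rw [harg, Complex.exp_add]
  ring

section Moments
variable {r : ℕ} (a : ℤ → Fin r → Fin r → ℂ) (υ : ℤ → Fin r → ℂ) (S N : Finset ℤ)

lemma moment1 (hS : ∀ i, Function.support (fun k => υ k i) ⊆ ↑S)
    (hN : ∀ i ℓ, Function.support (fun k => a k i ℓ) ⊆ ↑N) (ℓ : Fin r) (t : ℕ)
    (h : iteratedDeriv t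
        (fun ξ : ℂ => (∑ i : Fin r, symb (fun k => υ k i) (2 * ξ) * symbM a i ℓ ξ) -
          symb (fun k => υ k ℓ) ξ) 0 = 0) :
    ∑ p ∈ (Finset.univ : Finset (Fin r)) ×ˢ (S ×ˢ N),
        (υ p.2.1 p.1 * a p.2.2 p.1 ℓ) * ((2 * p.2.1 + p.2.2 : ℤ) : ℂ) ^ t
      = ∑ k ∈ S, υ k ℓ * (k : ℂ) ^ t := by
  classical
  set D := ((Finset.univ : Finset (Fin r)) ×ˢ (S ×ˢ N)).disjSum S with hD
  set c : (Fin r × ℤ × ℤ) ⊕ ℤ → ℂ :=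
    Sum.elim (fun p => υ p.2.1 p.1 * a p.2.2 p.1 ℓ) (fun k => -(υ k ℓ)) with hc
  set μ : (Fin r × ℤ × ℤ) ⊕ ℤ → ℂ :=
    Sum.elim (fun p => -Complex.I * ((2 * p.2.1 + p.2.2 : ℤ) : ℂ))
      (fun k => -Complex.I * (k : ℂ)) with hμ
  have hmom := expsum_moment D μ c t _ ?_ h
  · rw [hD, Finset.sum_disjSum] at hmom
    simp only [hc, hμ, Sum.elim_inl, Sum.elim_inr] at hmom
    have h1 : ∑ p ∈ (Finset.univ : Finset (Fin r)) ×ˢ (S ×ˢ N),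
        (υ p.2.1 p.1 * a p.2.2 p.1 ℓ) * (-Complex.I * ((2 * p.2.1 + p.2.2 : ℤ) : ℂ)) ^ t
        = (-Complex.I) ^ t * ∑ p ∈ (Finset.univ : Finset (Fin r)) ×ˢ (S ×ˢ N),
            (υ p.2.1 p.1 * a p.2.2 p.1 ℓ) * ((2 * p.2.1 + p.2.2 : ℤ) : ℂ) ^ t := by
      rw [Finset.mul_sum]
      exact Finset.sum_congr rfl fun p _ => by rw [mul_pow]; ring
    have h2 : ∑ k ∈ S, (-(υ k ℓ)) * (-Complex.I * (k : ℂ)) ^ t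
        = -((-Complex.I) ^ t * ∑ k ∈ S, υ k ℓ * (k : ℂ) ^ t) := by
      rw [Finset.mul_sum, ← Finset.sum_neg_distrib]
      exact Finset.sum_congr rfl fun k _ => by rw [mul_pow]; ring
    rw [h1, h2] at hmom
    have hI : ((-Complex.I) ^ t : ℂ) ≠ 0 := pow_ne_zero _ (by simp [Complex.I_ne_zero])
    apply mul_left_cancel₀ hI
    linear_combination hmom
  · funext ξ
    rw [hD, Finset.sum_disjSum]
    simp only [hc, hμ, Sum.elim_inl, Sum.elim_inr]
    rw [prod_expand a υ S N hS hN ℓ ξ, symb_eq_sum (hS ℓ) ξ]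
    have : ∑ k ∈ S, (-(υ k ℓ)) * Complex.exp (-Complex.I * (k : ℂ) * ξ)
        = -∑ k ∈ S, υ k ℓ * Complex.exp (-Complex.I * (k : ℂ) * ξ) := by
      rw [← Finset.sum_neg_distrib]
      exact Finset.sum_congr rfl fun k _ => by ring
    rw [this]
    ring

lemma prod_expand2 (hS : ∀ i, Function.support (fun k => υ k i) ⊆ ↑S)
    (hN : ∀ i ℓ, Function.support (fun k => a k i ℓ) ⊆ ↑N) (ℓ : Fin r) (ξ : ℂ) :
    ∑ i : Fin r, symb (fun k => υ k i) (2 * ξ) * symbM a i ℓ (ξ + (Real.pi : ℂ)) =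
      ∑ p ∈ (Finset.univ : Finset (Fin r)) ×ˢ (S ×ˢ N),
        (υ p.2.1 p.1 * a p.2.2 p.1 ℓ * eps p.2.2) *
          Complex.exp ((-Complex.I * ((2 * p.2.1 + p.2.2 : ℤ) : ℂ)) * ξ) := by
  rw [Finset.sum_product]
  refine Finset.sum_congr rfl fun i _ => ?_
  rw [symbM_eq_symb, symb_eq_sum (hS i), symb_eq_sum (hN i ℓ), Finset.sum_mul_sum,
    Finset.sum_product]
  refine Finset.sum_congr rfl fun s _ => Finset.sum_congr rfl fun n _ => ?_
  have harg : -Complex.I * (n : ℂ) * (ξ + (Real.pi : ℂ)) =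
      (-Complex.I * ((2 * s + n : ℤ) : ℂ)) * ξ + (-Complex.I * (n : ℂ)) * (Real.pi : ℂ)
        - (-Complex.I * (s : ℂ) * (2 * ξ)) := by
    push_cast; ring
  rw [harg, Complex.exp_sub, Complex.exp_add]
  unfold eps
  have hne : Complex.exp (-Complex.I * (s : ℂ) * (2 * ξ)) ≠ 0 := Complex.exp_ne_zero _
  field_simp

lemma moment2 (hS : ∀ i, Function.support (fun k => υ k i) ⊆ ↑S)
    (hN : ∀ i ℓ, Function.support (fun k => a k i ℓ) ⊆ ↑N) (ℓ : Fin r) (t : ℕ)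
    (h : iteratedDeriv t
        (fun ξ : ℂ => ∑ i : Fin r, symb (fun k => υ k i) (2 * ξ) *
          symbM a i ℓ (ξ + (Real.pi : ℂ))) 0 = 0) :
    ∑ p ∈ (Finset.univ : Finset (Fin r)) ×ˢ (S ×ˢ N),
        (υ p.2.1 p.1 * a p.2.2 p.1 ℓ * eps p.2.2) * ((2 * p.2.1 + p.2.2 : ℤ) : ℂ) ^ t
      = 0 := by
  classical
  have hmom := expsum_moment ((Finset.univ : Finset (Fin r)) ×ˢ (S ×ˢ N))
    (fun p => -Complex.I * ((2 * p.2.1 + p.2.2 : ℤ) : ℂ))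
    (fun p => υ p.2.1 p.1 * a p.2.2 p.1 ℓ * eps p.2.2) t _
    (funext fun ξ => prod_expand2 a υ S N hS hN ℓ ξ) h
  have h1 : ∑ p ∈ (Finset.univ : Finset (Fin r)) ×ˢ (S ×ˢ N),
      (υ p.2.1 p.1 * a p.2.2 p.1 ℓ * eps p.2.2) * (-Complex.I * ((2 * p.2.1 + p.2.2 : ℤ) : ℂ)) ^ t
      = (-Complex.I) ^ t * ∑ p ∈ (Finset.univ : Finset (Fin r)) ×ˢ (S ×ˢ N),
          (υ p.2.1 p.1 * a p.2.2 p.1 ℓ * eps p.2.2) * ((2 * p.2.1 + p.2.2 : ℤ) : ℂ) ^ t := by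
    rw [Finset.mul_sum]
    exact Finset.sum_congr rfl fun p _ => by rw [mul_pow]; ring
  rw [h1] at hmom
  have hI : ((-Complex.I) ^ t : ℂ) ≠ 0 := pow_ne_zero _ (by simp [Complex.I_ne_zero])
  exact (mul_eq_zero.mp hmom).resolve_left hI

end Moments

open Polynomial in
open Polynomial in
lemma pconv_eq_sum {u : ℤ → ℂ} {S : Finset ℤ} (h : Function.support u ⊆ ↑S)
    (q : Polynomial ℂ) :
    pconv q u = ∑ k ∈ S, u k • (q.comp (X - C (k : ℂ))) := by
  refine finsum_eq_sum_of_support_subset _ fun k hk => h ?_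
  simp only [Function.mem_support] at hk ⊢
  exact fun h0 => hk (by rw [h0, zero_smul])

open Polynomial in
lemma pconv_eval {u : ℤ → ℂ} {S : Finset ℤ} (h : Function.support u ⊆ ↑S)
    (j : ℕ) (z : ℂ) :
    (pconv (C ((Nat.factorial j : ℂ))⁻¹ * X ^ j) u).eval z
      = ∑ k ∈ S, u k * (((Nat.factorial j : ℂ))⁻¹ * (z - k) ^ j) := by
  rw [pconv_eq_sum h, Polynomial.eval_finset_sum]
  refine Finset.sum_congr rfl fun k _ => ?_
  simp [Polynomial.eval_smul, smul_eq_mul]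

open Polynomial in
lemma comp_eq (j : ℕ) (k : ℂ) :
    (C ((Nat.factorial j : ℂ))⁻¹ * X ^ j).comp (X - C k)
      = C ((Nat.factorial j : ℂ))⁻¹ * (X - C k) ^ j := by
  simp [Polynomial.mul_comp, Polynomial.pow_comp]

lemma fact_inv_ne (j : ℕ) : ((Nat.factorial j : ℂ))⁻¹ ≠ 0 :=
  inv_ne_zero (Nat.cast_ne_zero.mpr (Nat.factorial_ne_zero j))

open Polynomial in
lemma pconv_degree_le {u : ℤ → ℂ} {S : Finset ℤ} (h : Function.support u ⊆ ↑S) (j : ℕ) :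
    (pconv (C ((Nat.factorial j : ℂ))⁻¹ * X ^ j) u).degree ≤ (j : ℕ) := by
  rw [pconv_eq_sum h]
  refine (Polynomial.degree_sum_le _ _).trans (Finset.sup_le fun k _ => ?_)
  refine (Polynomial.degree_smul_le _ _).trans ?_
  rw [comp_eq, Polynomial.degree_C_mul (fact_inv_ne j), Polynomial.degree_pow,
    Polynomial.degree_X_sub_C]
  simp

open Polynomial in
lemma pconv_coeff {u : ℤ → ℂ} {S : Finset ℤ} (h : Function.support u ⊆ ↑S) (j : ℕ) :
    (pconv (C ((Nat.factorial j : ℂ))⁻¹ * X ^ j) u).coeff j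
      = ((Nat.factorial j : ℂ))⁻¹ * ∑ k ∈ S, u k := by
  rw [pconv_eq_sum h, Polynomial.finset_sum_coeff, Finset.mul_sum]
  refine Finset.sum_congr rfl fun k _ => ?_
  have hnd : ((X - C (k : ℂ)) ^ j).natDegree = j := by
    rw [Polynomial.natDegree_pow, Polynomial.natDegree_X_sub_C, mul_one]
  have h1 : ((X - C (k : ℂ)) ^ j).coeff j = 1 := by
    have := ((Polynomial.monic_X_sub_C (k : ℂ)).pow j).coeff_natDegree
    rwa [hnd] at this
  rw [comp_eq, Polynomial.coeff_smul, Polynomial.coeff_C_mul, h1, smul_eq_mul]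
  ring

open Polynomial in
lemma reshape {r : ℕ} (S N : Finset ℤ) (F : Fin r → ℤ → ℤ → ℂ) :
    ∑ n ∈ N, ∑ i : Fin r, ∑ s ∈ S, F i s n
      = ∑ p ∈ (Finset.univ : Finset (Fin r)) ×ˢ (S ×ˢ N), F p.1 p.2.1 p.2.2 := by
  rw [Finset.sum_product]
  simp_rw [Finset.sum_product]
  rw [Finset.sum_comm]
  exact Finset.sum_congr rfl fun i _ => Finset.sum_comm


/-- if `a` has order `m+1` sum rules w.r.t. `υ` with `υ̂(0) ≠ 0`, then
`p⃗_j := ((·)^j/j!)*υ` satisfies `S_a p⃗_j = 2^{-j} p⃗_j` and `deg p⃗_j = j` for `j = 0,…,m`. -/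
theorem stmt8 (r m : ℕ) (a : ℤ → Fin r → Fin r → ℂ)
    (ha : (Function.support a).Finite)
    (υ : ℤ → Fin r → ℂ) (hυ : (Function.support υ).Finite)
    (hυ0 : (fun ℓ => symb (fun k => υ k ℓ) 0) ≠ 0)
    (hsr1 : ∀ j ≤ m, ∀ ℓ : Fin r,
      iteratedDeriv j
        (fun ξ : ℂ => (∑ i : Fin r, symb (fun k => υ k i) (2 * ξ) * symbM a i ℓ ξ) -
          symb (fun k => υ k ℓ) ξ) 0 = 0)
    (hsr2 : ∀ j ≤ m, ∀ ℓ : Fin r,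
      iteratedDeriv j
        (fun ξ : ℂ => ∑ i : Fin r, symb (fun k => υ k i) (2 * ξ) *
          symbM a i ℓ (ξ + (Real.pi : ℂ))) 0 = 0) :
    ∀ j ≤ m,
      (∀ x : ℤ, ∀ ℓ : Fin r,
        sd a (fun k i => (pconv (Polynomial.C ((Nat.factorial j : ℂ))⁻¹ * Polynomial.X ^ j)
          (fun n => υ n i)).eval ((k : ℂ))) x ℓ =
        ((2 : ℂ) ^ j)⁻¹ * (pconv (Polynomial.C ((Nat.factorial j : ℂ))⁻¹ * Polynomial.X ^ j)
          (fun n => υ n ℓ)).eval ((x : ℂ))) ∧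
      (∀ ℓ : Fin r, (pconv (Polynomial.C ((Nat.factorial j : ℂ))⁻¹ * Polynomial.X ^ j)
          (fun n => υ n ℓ)).degree ≤ (j : ℕ)) ∧
      (∃ ℓ : Fin r, (pconv (Polynomial.C ((Nat.factorial j : ℂ))⁻¹ * Polynomial.X ^ j)
          (fun n => υ n ℓ)).degree = (j : ℕ)) := by
  classical
  intro j hj
  set S : Finset ℤ := hυ.toFinset with hSdef
  set N : Finset ℤ := ha.toFinset with hNdef
  have hS : ∀ i, Function.support (fun k => υ k i) ⊆ ↑S := by
    intro i k hk
    simp only [Function.mem_support] at hk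
    rw [hSdef, Set.Finite.coe_toFinset]
    exact Function.mem_support.mpr fun h0 => hk (by rw [h0]; rfl)
  have hN : ∀ i ℓ, Function.support (fun k => a k i ℓ) ⊆ ↑N := by
    intro i ℓ k hk
    simp only [Function.mem_support] at hk
    rw [hNdef, Set.Finite.coe_toFinset]
    exact Function.mem_support.mpr fun h0 => hk (by rw [h0]; rfl)
  have M1 : ∀ t ≤ m, ∀ ℓ : Fin r,
      ∑ p ∈ (Finset.univ : Finset (Fin r)) ×ˢ (S ×ˢ N),
          (υ p.2.1 p.1 * a p.2.2 p.1 ℓ) * ((2 * p.2.1 + p.2.2 : ℤ) : ℂ) ^ t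
        = ∑ k ∈ S, υ k ℓ * (k : ℂ) ^ t :=
    fun t ht ℓ => moment1 a υ S N hS hN ℓ t (hsr1 t ht ℓ)
  have M2 : ∀ t ≤ m, ∀ ℓ : Fin r,
      ∑ p ∈ (Finset.univ : Finset (Fin r)) ×ˢ (S ×ˢ N),
          (υ p.2.1 p.1 * a p.2.2 p.1 ℓ * eps p.2.2) * ((2 * p.2.1 + p.2.2 : ℤ) : ℂ) ^ t
        = 0 :=
    fun t ht ℓ => moment2 a υ S N hS hN ℓ t (hsr2 t ht ℓ)
  refine ⟨?_, fun ℓ => pconv_degree_le (hS ℓ) j, ?_⟩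
  · -- part 1
    intro x ℓ
    set gfun : ℤ → ℂ := fun n => ∑ i : Fin r, ∑ s ∈ S,
      (υ s i * a n i ℓ) * ((x : ℂ) - ((2 * s + n : ℤ) : ℂ)) ^ j with hgfun
    set N' : Finset ℤ := N.filter (fun n => (x - n) % 2 = 0) with hN'
    set T : Finset ℤ := N'.image (fun n => (x - n) / 2) with hT
    set q : Polynomial ℂ := Polynomial.C ((Nat.factorial j : ℂ))⁻¹ * Polynomial.X ^ j with hq
    have A : ∑ n ∈ N, gfun n = ∑ k ∈ S, υ k ℓ * ((x : ℂ) - (k : ℂ)) ^ j := by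
      rw [hgfun, reshape S N
        (fun i s n => (υ s i * a n i ℓ) * ((x : ℂ) - ((2 * s + n : ℤ) : ℂ)) ^ j)]
      exact moment_transfer _ _ _ _ _ _ j (fun t ht => M1 t (ht.trans hj) ℓ) (x : ℂ)
    have B : ∑ n ∈ N, gfun n * eps n = 0 := by
      have hrew : ∀ n ∈ N, gfun n * eps n = ∑ i : Fin r, ∑ s ∈ S,
          (υ s i * a n i ℓ * eps n) * ((x : ℂ) - ((2 * s + n : ℤ) : ℂ)) ^ j := by
        intro n _
        rw [hgfun, Finset.sum_mul]
        refine Finset.sum_congr rfl fun i _ => ?_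
        rw [Finset.sum_mul]
        exact Finset.sum_congr rfl fun s _ => by ring
      rw [Finset.sum_congr rfl hrew, reshape S N
        (fun i s n => (υ s i * a n i ℓ * eps n) * ((x : ℂ) - ((2 * s + n : ℤ) : ℂ)) ^ j)]
      have := moment_transfer ((Finset.univ : Finset (Fin r)) ×ˢ (S ×ˢ N)) (∅ : Finset ℤ)
        (fun p => υ p.2.1 p.1 * a p.2.2 p.1 ℓ * eps p.2.2)
        (fun p => ((2 * p.2.1 + p.2.2 : ℤ) : ℂ)) (fun _ => 0) (fun _ => 0) j
        (fun t ht => by simpa using M2 t (ht.trans hj) ℓ) (x : ℂ)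
      simpa using this
    have KEY : 2 * ∑ n ∈ N', gfun n = ∑ k ∈ S, υ k ℓ * ((x : ℂ) - (k : ℂ)) ^ j := by
      have hp := parity_sum N x gfun
      rw [A, B, mul_zero, add_zero] at hp
      rw [hN']
      exact hp
    have hsupp : Function.support
        (fun k : ℤ => ∑ i : Fin r, (pconv q (fun n => υ n i)).eval ((k : ℤ) : ℂ)
          * a (x - 2 * k) i ℓ) ⊆ ↑T := by
      intro k hk
      simp only [Function.mem_support] at hk
      have hne : ∃ i, a (x - 2 * k) i ℓ ≠ 0 := by
        by_contra hall
        push_neg at hall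
        exact hk (Finset.sum_eq_zero fun i _ => by rw [hall i, mul_zero])
      obtain ⟨i, hi⟩ := hne
      have hmem : (x - 2 * k) ∈ N := hN i ℓ (Function.mem_support.mpr hi)
      refine Finset.mem_coe.mpr (Finset.mem_image.mpr ⟨x - 2 * k, ?_, by omega⟩)
      rw [hN', Finset.mem_filter]
      exact ⟨hmem, by omega⟩
    have hinj : ∀ n₁ ∈ N', ∀ n₂ ∈ N', (x - n₁) / 2 = (x - n₂) / 2 → n₁ = n₂ := by
      intro n₁ h₁ n₂ h₂ he
      rw [hN', Finset.mem_filter] at h₁ h₂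
      omega
    have hg : ∀ n ∈ N', (∑ i : Fin r, (pconv q (fun n' => υ n' i)).eval
          ((((x - n) / 2 : ℤ)) : ℂ) * a (x - 2 * ((x - n) / 2)) i ℓ)
        = ((Nat.factorial j : ℂ))⁻¹ * ((2 : ℂ) ^ j)⁻¹ * gfun n := by
      intro n hn
      rw [hN', Finset.mem_filter] at hn
      have e1 : x - 2 * ((x - n) / 2) = n := by omega
      have hc2 : ((((x - n) / 2 : ℤ)) : ℂ) = ((x : ℂ) - (n : ℂ)) / 2 := by
        have e2 : ((x - n) / 2) * 2 = x - n := by omega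
        have e3 := congrArg (fun z : ℤ => (z : ℂ)) e2
        push_cast at e3
        linear_combination e3 / 2
      rw [e1, hgfun, Finset.mul_sum]
      refine Finset.sum_congr rfl fun i _ => ?_
      rw [hq, pconv_eval (hS i) j, Finset.sum_mul, Finset.mul_sum]
      refine Finset.sum_congr rfl fun s _ => ?_
      rw [hc2]
      push_cast
      have e4 : ((x : ℂ) - n) / 2 - s = ((x : ℂ) - (2 * s + n)) / 2 := by ring
      rw [e4, div_pow]
      ring
    show 2 * (∑ᶠ k : ℤ, ∑ i : Fin r, (pconv q (fun n => υ n i)).eval ((k : ℤ) : ℂ)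
        * a (x - 2 * k) i ℓ) = ((2 : ℂ) ^ j)⁻¹ * (pconv q (fun n => υ n ℓ)).eval ((x : ℂ))
    rw [finsum_eq_sum_of_support_subset _ hsupp, hT, Finset.sum_image hinj,
      Finset.sum_congr rfl hg, ← Finset.mul_sum]
    have hfac : 2 * (((Nat.factorial j : ℂ))⁻¹ * ((2 : ℂ) ^ j)⁻¹ * ∑ n ∈ N', gfun n)
        = ((Nat.factorial j : ℂ))⁻¹ * ((2 : ℂ) ^ j)⁻¹ * (2 * ∑ n ∈ N', gfun n) := by ring
    rw [hfac, KEY, hq, pconv_eval (hS ℓ) j, Finset.mul_sum, Finset.mul_sum]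
    exact Finset.sum_congr rfl fun k _ => by ring
  · -- part 3
    obtain ⟨ℓ, hℓ⟩ := Function.ne_iff.mp hυ0
    have hs0 : symb (fun k => υ k ℓ) 0 = ∑ k ∈ S, υ k ℓ := by
      rw [symb_eq_sum (hS ℓ) 0]
      exact Finset.sum_congr rfl fun k _ => by rw [mul_zero, Complex.exp_zero, mul_one]
    have hsum : ∑ k ∈ S, υ k ℓ ≠ 0 := by
      rw [← hs0]; simpa using hℓ
    have hcoeff : (pconv (Polynomial.C ((Nat.factorial j : ℂ))⁻¹ * Polynomial.X ^ j)
        (fun n => υ n ℓ)).coeff j ≠ 0 := by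
      rw [pconv_coeff (hS ℓ) j]
      exact mul_ne_zero (fact_inv_ne j) hsum
    exact ⟨ℓ, le_antisymm (pconv_degree_le (hS ℓ) j) (Polynomial.le_degree_of_ne_zero hcoeff)⟩
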